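/- For every feasible schedule S of the shared multi-processor instance there exists a feasible schedule S' that is normal and satisfies Ω(S') = Ω(S). Consequently, if an optimal feasible schedule exists, then there exists an optimal feasible schedule that is normal. -/

import Mathlib

/-- A feasible schedule for a shared multi-processor instance: jobs `J` with
processing times `p`, `m` shared processors.  Each job `j` gets a shared
processor `mu j`, a finite set `iv j` of pairwise disjoint open bounded
subintervals of `(0,∞)` (represented by their endpoint pairs) on which `j`
executes on processor `mu j`, and a private completion time `c j ≥ 0` so that
`j` executes on its private processor exactly in `(0, c j)`.  The private time
plus the total length of the shared intervals equals `p j`, and intervals of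
distinct jobs on a common shared processor are disjoint. -/
structure Schedule (J : Type) [Fintype J] [DecidableEq J] (m : ℕ) (p : J → ℝ) where
  mu : J → Fin m
  iv : J → Finset (ℝ × ℝ)
  c : J → ℝ
  c_nonneg : ∀ j, 0 ≤ c j
  iv_valid : ∀ j, ∀ q ∈ iv j, 0 ≤ q.1 ∧ q.1 ≤ q.2
  iv_disjoint : ∀ j, ∀ q ∈ iv j, ∀ q' ∈ iv j, q ≠ q' → q.2 ≤ q'.1 ∨ q'.2 ≤ q.1
  total : ∀ j, c j + ∑ q ∈ iv j, (q.2 - q.1) = p j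
  shared_disjoint : ∀ j j', j ≠ j' → mu j = mu j' →
    ∀ q ∈ iv j, ∀ q' ∈ iv j', q.2 ≤ q'.1 ∨ q'.2 ≤ q.1

namespace Schedule

variable {J : Type} [Fintype J] [DecidableEq J] {m : ℕ} {p : J → ℝ}

/-- The overlap `t_j` of job `j`: total length of `(0, c j) ∩ ⋃ (iv j)`. -/
noncomputable def overlap (S : Schedule J m p) (j : J) : ℝ :=
  ∑ q ∈ S.iv j, max 0 (min (S.c j) q.2 - q.1)

/-- Total weighted overlap `Ω(S) = Σ_j w_j t_j`. -/
noncomputable def Omega (S : Schedule J m p) (w : J → ℝ) : ℝ :=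
  ∑ j, w j * S.overlap j

/-- Completion time of `j` on its shared processor: the supremum of right
endpoints of its shared intervals, `0` if there are none. -/
noncomputable def ftime (S : Schedule J m p) (j : J) : ℝ :=
  WithBot.unbotD 0 (((S.iv j).image Prod.snd).max)

/-- A schedule is normal if every job completes on the shared processor no
later than on its private processor. -/
def Normal (S : Schedule J m p) : Prop := ∀ j, S.ftime j ≤ S.c j

/-- A schedule is optimal if it maximizes the total weighted overlap. -/
def Optimal (S : Schedule J m p) (w : J → ℝ) : Prop :=
  ∀ S' : Schedule J m p, S'.Omega w ≤ S.Omega w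

end Schedule

/-- For every feasible schedule `S` there is a feasible
schedule `S'` that is normal and has the same total weighted overlap;
consequently, if an optimal feasible schedule exists, then there exists an
optimal feasible schedule that is normal. -/
theorem exists_normal_with_same_overlap_and_exists_optimal_normal
    {J : Type} [Fintype J] [DecidableEq J] {m : ℕ} (hm : 1 ≤ m)
    (p w : J → ℝ) (hp : ∀ j, 0 < p j) (hw : ∀ j, 0 < w j) :
    (∀ S : Schedule J m p, ∃ S' : Schedule J m p,
        S'.Normal ∧ S'.Omega w = S.Omega w) ∧
    ((∃ S : Schedule J m p, S.Optimal w) →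
      ∃ S' : Schedule J m p, S'.Optimal w ∧ S'.Normal) := by
  classical
  have key : ∀ S : Schedule J m p, ∃ S' : Schedule J m p,
      S'.Normal ∧ S'.Omega w = S.Omega w := by
    intro S
    -- F j : intervals with a positive part below c j
    set F : J → Finset (ℝ × ℝ) :=
      fun j => (S.iv j).filter (fun q => q.1 < min (S.c j) q.2) with hF
    have hFsub : ∀ j, F j ⊆ S.iv j := fun j => Finset.filter_subset _ _
    -- the truncation map
    set tr : J → ℝ × ℝ → ℝ × ℝ := fun j q => (q.1, min (S.c j) q.2) with htr
    have hinj : ∀ j, ∀ q ∈ F j, ∀ q' ∈ F j, tr j q = tr j q' → q = q' := by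
      intro j q hq q' hq' h
      by_contra hne
      simp only [hF, Finset.mem_filter] at hq hq'
      have h1 : q.1 = q'.1 := by
        have := congrArg Prod.fst h
        simpa [htr] using this
      have hd := S.iv_disjoint j q hq.1 q' hq'.1 hne
      have hm1 : min (S.c j) q.2 ≤ q.2 := min_le_right _ _
      have hm2 : min (S.c j) q'.2 ≤ q'.2 := min_le_right _ _
      rcases hd with h2 | h2
      · linarith [hq.2, hq'.2]
      · linarith [hq.2, hq'.2]
    -- sum of truncated lengths over image
    have hsumim : ∀ j, ∑ q ∈ (F j).image (tr j), (q.2 - q.1)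
        = ∑ q ∈ F j, (min (S.c j) q.2 - q.1) := by
      intro j
      rw [Finset.sum_image (hinj j)]
    -- overlap of S equals sum over F
    have hoverlap : ∀ j, S.overlap j = ∑ q ∈ F j, (min (S.c j) q.2 - q.1) := by
      intro j
      unfold Schedule.overlap
      rw [hF, Finset.sum_filter]
      apply Finset.sum_congr rfl
      intro q hq
      by_cases h : q.1 < min (S.c j) q.2
      · rw [if_pos h, max_eq_right (sub_nonneg.mpr (le_of_lt h))]
      · rw [if_neg h, max_eq_left (sub_nonpos.mpr (not_lt.mp h))]
    -- overlap ≤ total shared length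
    have hov_le : ∀ j, ∑ q ∈ F j, (min (S.c j) q.2 - q.1) ≤ ∑ q ∈ S.iv j, (q.2 - q.1) := by
      intro j
      calc ∑ q ∈ F j, (min (S.c j) q.2 - q.1) ≤ ∑ q ∈ F j, (q.2 - q.1) := by
            apply Finset.sum_le_sum
            intro q hq
            have : min (S.c j) q.2 ≤ q.2 := min_le_right _ _
            linarith
        _ ≤ ∑ q ∈ S.iv j, (q.2 - q.1) := by
            apply Finset.sum_le_sum_of_subset_of_nonneg (hFsub j)
            intro q hq _
            have := (S.iv_valid j q hq).2
            linarith
    -- new private completion times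
    set c' : J → ℝ := fun j => p j - ∑ q ∈ F j, (min (S.c j) q.2 - q.1) with hc'
    have hc'ge : ∀ j, S.c j ≤ c' j := by
      intro j
      have ht := S.total j
      have := hov_le j
      simp only [hc']
      linarith
    -- build the new schedule
    refine ⟨⟨S.mu, fun j => (F j).image (tr j), c', ?_, ?_, ?_, ?_, ?_⟩, ?_, ?_⟩
    · intro j; exact le_trans (S.c_nonneg j) (hc'ge j)
    · intro j q hq
      simp only [Finset.mem_image] at hq
      obtain ⟨r, hr, rfl⟩ := hq
      simp only [hF, Finset.mem_filter] at hr
      exact ⟨(S.iv_valid j r hr.1).1, le_of_lt hr.2⟩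
    · intro j q hq q' hq' hne
      simp only [Finset.mem_image] at hq hq'
      obtain ⟨r, hr, rfl⟩ := hq
      obtain ⟨r', hr', rfl⟩ := hq'
      have hrne : r ≠ r' := fun h => hne (by rw [h])
      have hd := S.iv_disjoint j r (hFsub j hr) r' (hFsub j hr') hrne
      have hm1 : min (S.c j) r.2 ≤ r.2 := min_le_right _ _
      have hm2 : min (S.c j) r'.2 ≤ r'.2 := min_le_right _ _
      rcases hd with h2 | h2
      · left; exact le_trans hm1 h2
      · right; exact le_trans hm2 h2
    · intro j
      rw [hsumim j]
      simp only [hc']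
      ring
    · intro j j' hjj' hmu q hq q' hq'
      simp only [Finset.mem_image] at hq hq'
      obtain ⟨r, hr, rfl⟩ := hq
      obtain ⟨r', hr', rfl⟩ := hq'
      have hd := S.shared_disjoint j j' hjj' hmu r (hFsub j hr) r' (hFsub j' hr')
      have hm1 : min (S.c j) r.2 ≤ r.2 := min_le_right _ _
      have hm2 : min (S.c j') r'.2 ≤ r'.2 := min_le_right _ _
      rcases hd with h2 | h2
      · left; exact le_trans hm1 h2
      · right; exact le_trans hm2 h2
    · -- Normal
      intro j
      show WithBot.unbotD 0 ((((F j).image (tr j)).image Prod.snd).max) ≤ c' j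
      have hc0 : 0 ≤ c' j := le_trans (S.c_nonneg j) (hc'ge j)
      cases hs : (((F j).image (tr j)).image Prod.snd).max with
      | bot => simpa using hc0
      | coe b =>
        have hb := Finset.mem_of_max hs
        simp only [Finset.mem_image] at hb
        obtain ⟨r, hr, hb2⟩ := hb
        obtain ⟨r', hr', rfl⟩ := hr
        have : b ≤ S.c j := by
          rw [← hb2]; exact min_le_left _ _
        simpa [hs] using le_trans this (hc'ge j)
    · -- Omega equal
      unfold Schedule.Omega
      apply Finset.sum_congr rfl
      intro j _
      congr 1
      show ∑ q ∈ (F j).image (tr j), max 0 (min (c' j) q.2 - q.1) = S.overlap j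
      rw [Finset.sum_image (hinj j), hoverlap j]
      apply Finset.sum_congr rfl
      intro q hq
      simp only [hF, Finset.mem_filter] at hq
      have h1 : min (S.c j) q.2 ≤ S.c j := min_le_left _ _
      have h2 : min (S.c j) q.2 ≤ c' j := le_trans h1 (hc'ge j)
      show max 0 (min (c' j) (min (S.c j) q.2) - q.1) = min (S.c j) q.2 - q.1
      rw [min_eq_right h2, max_eq_right]
      linarith [hq.2]
  refine ⟨key, ?_⟩
  rintro ⟨S, hS⟩
  obtain ⟨S', hN, hΩ⟩ := key S
  exact ⟨S', fun S'' => hΩ ▸ hS S'', hN⟩
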